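/- arXiv:1512.06353 — 3 statements merged into one kernel-verified Lean document; each statement's English description precedes it below -/
import Mathlib

section
/- Let C_ℓ ≥ 0, and let airplanes A_i, A_j have volumes v_i, v_j > 0 and rates c_i, c_j > 0 with v_i/c_i = v_j/c_j and c_i < c_j. Then v_i/(C_ℓ + c_i) + v_j/(C_ℓ + c_j + c_i) > v_j/(C_ℓ + c_j) + v_i/(C_ℓ + c_j + c_i). That is, placing the plane with smaller consumption rate first strictly increases the combined distance contribution of two adjacent planes. -/
/-- With equal ratios `v_i/c_i = v_j/c_j` and `c_i < c_j`, placing the plane with the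
smaller consumption rate first strictly increases the combined contribution. -/
theorem swap_smaller_rate_first (Cℓ v_i v_j c_i c_j : ℝ)
    (hC : 0 ≤ Cℓ) (hvi : 0 < v_i) (hvj : 0 < v_j) (hci : 0 < c_i) (hcj : 0 < c_j)
    (hratio : v_i / c_i = v_j / c_j) (hlt : c_i < c_j) :
    v_j / (Cℓ + c_j) + v_i / (Cℓ + c_j + c_i) <
      v_i / (Cℓ + c_i) + v_j / (Cℓ + c_i + c_j) := by
  have hvij : v_i * c_j = v_j * c_i := by
    field_simp at hratio; linarith
  have h1 : 0 < Cℓ + c_i := by linarith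
  have h2 : 0 < Cℓ + c_j := by linarith
  have h3 : 0 < Cℓ + c_i + c_j := by linarith
  have h4 : (Cℓ + c_j + c_i) = (Cℓ + c_i + c_j) := by ring
  rw [h4]
  rw [div_add_div _ _ (ne_of_gt h2) (ne_of_gt h3), div_add_div _ _ (ne_of_gt h1) (ne_of_gt h3),
    div_lt_div_iff₀ (by positivity) (by positivity)]
  have hv : v_i < v_j := by nlinarith
  have key : (v_i * (Cℓ + c_i + c_j) + (Cℓ + c_i) * v_j) * ((Cℓ + c_j) * (Cℓ + c_i + c_j)) -
      (v_j * (Cℓ + c_i + c_j) + (Cℓ + c_j) * v_i) * ((Cℓ + c_i) * (Cℓ + c_i + c_j)) =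
      (v_j - v_i) * c_i * c_j * (Cℓ + c_i + c_j) := by
    linear_combination (Cℓ + c_i + c_j) ^ 2 * hvij
  nlinarith [mul_pos (mul_pos (mul_pos (sub_pos.2 hv) hci) hcj) h3]
end

section
/- Given an airplane refueling instance where all planes have the same ratio v_j/c_j = ρ, any permutation that orders the airplanes by non-decreasing c_j values maximizes the objective D(π) = ∑_{j=1}^n v_{π(j)} / (∑_{k=1}^j c_{π(k)}). -/
open Finset

open scoped Classical in
noncomputable def invSet {n : ℕ} (g : Fin n → ℝ) : Finset (Fin n × Fin n) :=
  Finset.univ.filter (fun p => p.1 < p.2 ∧ g p.2 < g p.1)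

noncomputable def Fobj {n : ℕ} (g : Fin n → ℝ) : ℝ :=
  ∑ j : Fin n, g j / ∑ k ∈ Finset.Iic j, g k

section helpers
variable {n : ℕ}

lemma swap_prefix_sum (g : Fin n → ℝ) {i : ℕ} (hi : i + 1 < n)
    {j : Fin n} (hj : j ≠ ⟨i, by omega⟩) :
    ∑ k ∈ Finset.Iic j, g (Equiv.swap (⟨i, by omega⟩ : Fin n) ⟨i+1, hi⟩ k)
      = ∑ k ∈ Finset.Iic j, g k := by
  set a : Fin n := ⟨i, by omega⟩
  set b : Fin n := ⟨i+1, hi⟩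
  rcases lt_or_ge (j : ℕ) i with h | h
  · refine Finset.sum_congr rfl fun k hk => ?_
    have hk' : (k : ℕ) ≤ (j : ℕ) := Fin.le_def.1 (Finset.mem_Iic.1 hk)
    rw [Equiv.swap_apply_of_ne_of_ne]
    · exact fun hka => by simp [a, Fin.ext_iff] at hka; omega
    · exact fun hkb => by simp [b, Fin.ext_iff] at hkb; omega
  · have h' : i + 1 ≤ (j : ℕ) := by
      rcases Nat.eq_or_lt_of_le h with h'' | h''
      · exact absurd (Fin.ext h''.symm) hj
      · omega
    refine Equiv.Perm.sum_comp _ _ _ fun x hx => ?_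
    have := Equiv.swap_apply_ne_self_iff.1 hx
    rcases this.2 with rfl | rfl <;> simp [Finset.mem_Iic, Fin.le_def, a, b] <;> omega

lemma Fobj_le_swap (g : Fin n → ℝ) (hg : ∀ j, 0 < g j) {i : ℕ} (hi : i + 1 < n)
    (hd : g ⟨i+1, hi⟩ < g ⟨i, by omega⟩) :
    Fobj g ≤ Fobj (g ∘ Equiv.swap (⟨i, by omega⟩ : Fin n) ⟨i+1, hi⟩) := by
  set a : Fin n := ⟨i, by omega⟩ with ha
  set b : Fin n := ⟨i+1, hi⟩ with hb
  have hab : a ≠ b := by simp [ha, hb, Fin.ext_iff]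
  set τ := Equiv.swap a b with hτ
  set A : ℝ := ∑ k ∈ Finset.Iio a, g k with hA
  have hA0 : 0 ≤ A := Finset.sum_nonneg fun k _ => (hg k).le
  have hSa : ∑ k ∈ Finset.Iic a, g k = A + g a := by
    rw [← Finset.Iio_insert, Finset.sum_insert (by simp)]; ring
  have hva : (a : ℕ) = i := rfl
  have hvb : (b : ℕ) = i + 1 := rfl
  have hIicb : Finset.Iic b = insert b (Finset.Iic a) := by
    ext k
    simp only [Finset.mem_Iic, Finset.mem_insert, Fin.le_def, Fin.ext_iff]
    omega
  have hSb : ∑ k ∈ Finset.Iic b, g k = A + g a + g b := by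
    rw [hIicb, Finset.sum_insert (by simp only [Finset.mem_Iic, Fin.le_def]; omega), hSa]; ring
  have hS'a : ∑ k ∈ Finset.Iic a, g (τ k) = A + g b := by
    rw [← Finset.Iio_insert, Finset.sum_insert (by simp), Equiv.swap_apply_left]
    have : ∑ k ∈ Finset.Iio a, g (τ k) = A := by
      refine Finset.sum_congr rfl fun k hk => ?_
      have hk' : (k : ℕ) < (a : ℕ) := Fin.lt_def.1 (Finset.mem_Iio.1 hk)
      rw [Equiv.swap_apply_of_ne_of_ne]
      · exact fun h => by have := congrArg Fin.val h; omega
      · exact fun h => by have := congrArg Fin.val h; omega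
    rw [this]; ring
  have split : ∀ h : Fin n → ℝ, ∑ j : Fin n, h j
      = ∑ j ∈ ({a, b} : Finset (Fin n))ᶜ, h j + (h a + h b) := fun h => by
    rw [← Finset.sum_compl_add_sum ({a, b} : Finset (Fin n)) h, Finset.sum_pair hab]
  rw [Fobj, Fobj, split, split]
  have hcompl : ∑ j ∈ ({a, b} : Finset (Fin n))ᶜ,
        (g ∘ τ) j / ∑ k ∈ Finset.Iic j, (g ∘ τ) k
      = ∑ j ∈ ({a, b} : Finset (Fin n))ᶜ, g j / ∑ k ∈ Finset.Iic j, g k := by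
    refine Finset.sum_congr rfl fun j hj => ?_
    have hj' : j ≠ a ∧ j ≠ b := by
      simpa [Finset.mem_compl, not_or] using hj
    have h1 : (g ∘ τ) j = g j := by
      simp only [Function.comp_apply, hτ, Equiv.swap_apply_of_ne_of_ne hj'.1 hj'.2]
    have h2 : ∑ k ∈ Finset.Iic j, (g ∘ τ) k = ∑ k ∈ Finset.Iic j, g k :=
      swap_prefix_sum g hi hj'.1
    rw [h1, h2]
  rw [hcompl]
  refine add_le_add le_rfl ?_
  have e1 : (g ∘ τ) a = g b := by simp [hτ]
  have e2 : (g ∘ τ) b = g a := by simp [hτ]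
  have e3 : ∑ k ∈ Finset.Iic a, (g ∘ τ) k = A + g b := hS'a
  have e4 : ∑ k ∈ Finset.Iic b, (g ∘ τ) k = ∑ k ∈ Finset.Iic b, g k :=
    swap_prefix_sum g hi hab.symm
  rw [e1, e2, e3, e4, hSa, hSb]
  have hx : 0 < g b := hg b
  have hy : 0 < g a := hg a
  have hxy : g b < g a := hd
  have h1 : 0 < A + g b := by linarith
  have h2 : 0 < A + g a := by linarith
  have h3 : 0 < A + g a + g b := by linarith
  have key : g b / (A + g b) + g a / (A + g a + g b)
      - (g a / (A + g a) + g b / (A + g a + g b))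
      = (g a - g b) * (g a * g b) / ((A + g a) * (A + g b) * (A + g a + g b)) := by
    field_simp
    ring
  nlinarith [div_nonneg (mul_nonneg (by linarith : (0:ℝ) ≤ g a - g b)
    (mul_nonneg hy.le hx.le)) (by positivity : (0:ℝ) ≤ (A + g a) * (A + g b) * (A + g a + g b))]

lemma invSet_swap_lt (g : Fin n → ℝ) {i : ℕ} (hi : i + 1 < n)
    (hd : g ⟨i+1, hi⟩ < g ⟨i, by omega⟩) :
    (invSet (g ∘ Equiv.swap (⟨i, by omega⟩ : Fin n) ⟨i+1, hi⟩)).card < (invSet g).card := by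
  classical
  set a : Fin n := ⟨i, by omega⟩ with ha
  set b : Fin n := ⟨i+1, hi⟩ with hb
  have hva : (a : ℕ) = i := rfl
  have hvb : (b : ℕ) = i + 1 := rfl
  set τ := Equiv.swap a b with hτ
  have hmem : ∀ (h : Fin n → ℝ) (p : Fin n × Fin n),
      p ∈ invSet h ↔ p.1 < p.2 ∧ h p.2 < h p.1 := by
    intro h p; simp [invSet]
  have hmemg : (a, b) ∈ invSet g := by
    rw [hmem]
    exact ⟨by show a < b; rw [ha, hb]; exact Fin.mk_lt_mk.2 (by omega), hd⟩
  have hsub : (invSet (g ∘ τ)).image (Prod.map τ τ) ⊆ invSet g := by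
    intro x hx
    obtain ⟨p, hp, rfl⟩ := Finset.mem_image.1 hx
    rw [hmem] at hp
    obtain ⟨hplt, hpval⟩ := hp
    rw [hmem]
    refine ⟨?_, hpval⟩
    -- show τ p.1 < τ p.2
    have hne : ¬(p.1 = a ∧ p.2 = b) := by
      rintro ⟨h1, h2⟩
      rw [h1, h2] at hpval
      simp only [Function.comp_apply, hτ, Equiv.swap_apply_left, Equiv.swap_apply_right] at hpval
      exact absurd hpval (not_lt.2 hd.le)
    show τ p.1 < τ p.2
    rw [Fin.lt_def]
    have h12 : (p.1 : ℕ) < (p.2 : ℕ) := Fin.lt_def.1 hplt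
    by_cases e1a : p.1 = a
    · have e2b : p.2 ≠ b := fun h => hne ⟨e1a, h⟩
      have e2a : p.2 ≠ a := fun h => absurd hplt (by rw [e1a, h]; exact lt_irrefl _)
      rw [e1a, hτ, Equiv.swap_apply_left, Equiv.swap_apply_of_ne_of_ne e2a e2b]
      have n1 : (p.2 : ℕ) ≠ (b : ℕ) := fun h => e2b (Fin.ext h)
      have n2 := congrArg Fin.val e1a
      omega
    · by_cases e1b : p.1 = b
      · have e2a : p.2 ≠ a := by
          intro h
          have h1 := congrArg Fin.val e1b
          have h2 := congrArg Fin.val h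
          omega
        have e2b : p.2 ≠ b := fun h => absurd hplt (by rw [e1b, h]; exact lt_irrefl _)
        rw [e1b, hτ, Equiv.swap_apply_right, Equiv.swap_apply_of_ne_of_ne e2a e2b]
        have := congrArg Fin.val e1b
        omega
      · rw [hτ, Equiv.swap_apply_of_ne_of_ne e1a e1b]
        by_cases e2a : p.2 = a
        · rw [e2a, Equiv.swap_apply_left]
          have := congrArg Fin.val e2a
          omega
        · by_cases e2b : p.2 = b
          · rw [e2b, Equiv.swap_apply_right]
            have n1 : (p.1 : ℕ) ≠ (a : ℕ) := fun h => e1a (Fin.ext h)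
            have := congrArg Fin.val e2b
            omega
          · rw [Equiv.swap_apply_of_ne_of_ne e2a e2b]; exact h12
  have hnotmem : (a, b) ∉ (invSet (g ∘ τ)).image (Prod.map τ τ) := by
    intro hx
    obtain ⟨p, hp, heq⟩ := Finset.mem_image.1 hx
    rw [hmem] at hp
    have h1 : τ p.1 = a := congrArg Prod.fst heq
    have h2 : τ p.2 = b := congrArg Prod.snd heq
    have e1 : p.1 = b := by
      have := congrArg τ h1; simpa [hτ, Equiv.swap_apply_self, Equiv.swap_apply_left] using this
    have e2 : p.2 = a := by
      have := congrArg τ h2; simpa [hτ, Equiv.swap_apply_self, Equiv.swap_apply_right] using this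
    have := hp.1
    rw [e1, e2, Fin.lt_def] at this
    omega
  have hss : (invSet (g ∘ τ)).image (Prod.map τ τ) ⊂ invSet g :=
    (Finset.ssubset_iff_of_subset hsub).2 ⟨(a, b), hmemg, hnotmem⟩
  have hinj : Function.Injective (Prod.map τ τ : Fin n × Fin n → Fin n × Fin n) :=
    Function.Injective.prodMap τ.injective τ.injective
  calc (invSet (g ∘ τ)).card
      = ((invSet (g ∘ τ)).image (Prod.map τ τ)).card :=
        (Finset.card_image_of_injective _ hinj).symm
    _ < (invSet g).card := Finset.card_lt_card hss

lemma mono_of_no_desc (g : Fin n → ℝ)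
    (h : ∀ i (hi : i + 1 < n), g ⟨i, by omega⟩ ≤ g ⟨i+1, hi⟩) : Monotone g := by
  have step : ∀ d p, ∀ hd : p + d < n, g ⟨p, by omega⟩ ≤ g ⟨p + d, hd⟩ := by
    intro d
    induction d with
    | zero => intro p hd; exact le_of_eq (congrArg g (Fin.ext rfl))
    | succ d ih =>
      intro p hd
      have h1 : p + d + 1 < n := by omega
      have h2 := h (p + d) h1
      have h3 := ih p (by omega)
      refine h3.trans (le_of_le_of_eq h2 (congrArg g (Fin.ext ?_)))
      simp; omega
  intro p q hpq
  have hs := step ((q : ℕ) - (p : ℕ)) (p : ℕ) (by omega)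
  have e1 : (⟨(p : ℕ), by omega⟩ : Fin n) = p := Fin.ext rfl
  have e2 : (⟨(p : ℕ) + ((q : ℕ) - (p : ℕ)), by omega⟩ : Fin n) = q := by
    apply Fin.ext; simp; omega
  rwa [e1, e2] at hs

lemma fobj_of_mono (g : Fin n → ℝ) (hmono : Monotone g) :
    g ∘ Tuple.sort g = g := by
  rw [Tuple.sort_eq_refl_iff_monotone.2 hmono]; rfl

lemma fobj_of_card_zero (g : Fin n → ℝ) (h0 : (invSet g).card = 0) :
    Fobj g ≤ Fobj (g ∘ Tuple.sort g) := by
  classical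
  have hempty : invSet g = ∅ := Finset.card_eq_zero.1 h0
  have hmono : Monotone g := by
    intro p q hpq
    rcases eq_or_lt_of_le hpq with rfl | hlt
    · exact le_rfl
    · by_contra hcon
      push_neg at hcon
      have : (p, q) ∈ invSet g := by simp [invSet, hlt, hcon]
      rw [hempty] at this
      exact absurd this (Finset.notMem_empty _)
  rw [fobj_of_mono g hmono]

lemma key_le (N : ℕ) : ∀ g : Fin n → ℝ, (∀ j, 0 < g j) → (invSet g).card ≤ N →
    Fobj g ≤ Fobj (g ∘ Tuple.sort g) := by
  induction N with
  | zero => exact fun g hg hN => fobj_of_card_zero g (Nat.le_zero.1 hN)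
  | succ N ih =>
    intro g hg hN
    by_cases hcard : (invSet g).card = 0
    · exact fobj_of_card_zero g hcard
    · have hex : ∃ i, ∃ hi : i + 1 < n, g ⟨i+1, hi⟩ < g ⟨i, by omega⟩ := by
        by_contra hno
        push_neg at hno
        have hmono : Monotone g := mono_of_no_desc g fun i hi => hno i hi
        have hempty : invSet g = ∅ := by
          classical
          apply Finset.eq_empty_of_forall_notMem
          intro p hp
          have hp' : p.1 < p.2 ∧ g p.2 < g p.1 := by simpa [invSet] using hp
          exact absurd (hmono hp'.1.le) (not_le.2 hp'.2)
        exact hcard (by rw [hempty]; simp)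
      obtain ⟨i, hi, hd⟩ := hex
      have h1 : Fobj g ≤ Fobj (g ∘ Equiv.swap (⟨i, by omega⟩ : Fin n) ⟨i+1, hi⟩) :=
        Fobj_le_swap g hg hi hd
      have h2 : (invSet (g ∘ Equiv.swap (⟨i, by omega⟩ : Fin n) ⟨i+1, hi⟩)).card ≤ N := by
        have := invSet_swap_lt g hi hd; omega
      have h3 := ih (g ∘ Equiv.swap (⟨i, by omega⟩ : Fin n) ⟨i+1, hi⟩)
        (fun j => hg _) h2
      rw [Tuple.comp_perm_comp_sort_eq_comp_sort] at h3
      exact h1.trans h3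

end helpers

/-- If all ratios `v_j / c_j` are equal to `ρ`, then any permutation ordering the planes
by non-decreasing consumption rate maximizes the objective
`D(π) = ∑_j v_{π(j)} / ∑_{k ≤ j} c_{π(k)}`. -/
theorem greedy_optimal_equal_ratios (n : ℕ) (v c : Fin n → ℝ) (ρ : ℝ)
    (hv : ∀ j, 0 < v j) (hc : ∀ j, 0 < c j)
    (hratio : ∀ j, v j / c j = ρ)
    (π : Equiv.Perm (Fin n)) (hsorted : ∀ i j : Fin n, i ≤ j → c (π i) ≤ c (π j))
    (σ : Equiv.Perm (Fin n)) :
    ∑ j : Fin n, v (σ j) / (∑ k ∈ Finset.Iic j, c (σ k)) ≤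
      ∑ j : Fin n, v (π j) / (∑ k ∈ Finset.Iic j, c (π k)) := by
  rcases Nat.eq_zero_or_pos n with rfl | hn
  · simp
  have hρ : ∀ j, v j = ρ * c j := fun j => by
    rw [← hratio j, div_mul_cancel₀]
    exact (hc j).ne'
  have hρpos : 0 < ρ := by
    rw [← hratio ⟨0, hn⟩]
    exact div_pos (hv _) (hc _)
  have hrw : ∀ e : Equiv.Perm (Fin n),
      ∑ j : Fin n, v (e j) / (∑ k ∈ Finset.Iic j, c (e k)) = ρ * Fobj (c ∘ e) := by
    intro e
    rw [Fobj, Finset.mul_sum]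
    exact Finset.sum_congr rfl fun j _ => by rw [hρ (e j), mul_div_assoc]; rfl
  rw [hrw σ, hrw π]
  have hmonoπ : Monotone (c ∘ π) := fun p q h => hsorted p q h
  have h1 : Fobj (c ∘ σ) ≤ Fobj ((c ∘ σ) ∘ Tuple.sort (c ∘ σ)) :=
    key_le _ (c ∘ σ) (fun j => hc _) le_rfl
  have h2 : (c ∘ σ) ∘ Tuple.sort (c ∘ ⇑σ) = c ∘ Tuple.sort c :=
    Tuple.comp_perm_comp_sort_eq_comp_sort
  have h3 : c ∘ π = c ∘ Tuple.sort c := by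
    have h4 : (c ∘ π) ∘ Tuple.sort (c ∘ ⇑π) = c ∘ Tuple.sort c :=
      Tuple.comp_perm_comp_sort_eq_comp_sort
    rwa [fobj_of_mono (c ∘ π) hmonoπ] at h4
  rw [h2] at h1
  rw [h3]
  exact mul_le_mul_of_nonneg_left h1 hρpos.le
end

section
/- Random class deletion preserves value in expectation: partition planes into classes S_1, S_2, … and for r drawn uniformly from {0,…,1/ε−1}, delete all classes S_ℓ with ℓ ≡ r (mod 1/ε). The expected optimal objective of the surviving instance is at least (1−ε)·OPT. -/
/-- The airplane refueling objective of a drop-out ordering given as a list, with `acc`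
the accumulated consumption rate of earlier planes. -/
noncomputable def refuelValue {α : Type*} (v c : α → ℝ) : List α → ℝ → ℝ
  | [], _ => 0
  | a :: t, acc => v a / (acc + c a) + refuelValue v c t (acc + c a)

/-- The optimal objective value over all orderings of the planes of `T`. -/
noncomputable def refuelOpt {α : Type*} [DecidableEq α] (v c : α → ℝ) (T : Finset α) : ℝ :=
  sSup {x : ℝ | ∃ l : List α, l.Nodup ∧ l.toFinset = T ∧ x = refuelValue v c l 0}

section Aux

variable {α : Type*} (v c : α → ℝ)

lemma rv_nonneg (hv : ∀ j, 0 < v j) (hc : ∀ j, 0 < c j) :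
    ∀ (l : List α) (acc : ℝ), 0 ≤ acc → 0 ≤ refuelValue v c l acc
  | [], acc, _ => le_refl 0
  | a :: t, acc, h => by
      simp only [refuelValue]
      have h1 : 0 < acc + c a := by linarith [hc a]
      have h2 := rv_nonneg hv hc t (acc + c a) h1.le
      have h3 : 0 ≤ v a / (acc + c a) := div_nonneg (hv a).le h1.le
      linarith

lemma rv_mono (hv : ∀ j, 0 < v j) (hc : ∀ j, 0 < c j) :
    ∀ (l : List α) (acc₁ acc₂ : ℝ), 0 ≤ acc₁ → acc₁ ≤ acc₂ →
      refuelValue v c l acc₂ ≤ refuelValue v c l acc₁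
  | [], _, _, _, _ => le_refl 0
  | a :: t, acc₁, acc₂, h0, h12 => by
      simp only [refuelValue]
      have h1 : 0 < acc₁ + c a := by linarith [hc a]
      have h2 : acc₁ + c a ≤ acc₂ + c a := by linarith
      gcongr
      · exact (hv a).le
      · exact rv_mono hv hc t _ _ h1.le h2

lemma rv_bound [DecidableEq α] (hv : ∀ j, 0 < v j) (hc : ∀ j, 0 < c j) :
    ∀ (l : List α) (acc : ℝ), l.Nodup → 0 ≤ acc →
      refuelValue v c l acc ≤ ∑ a ∈ l.toFinset, v a / c a
  | [], acc, _, _ => by simp [refuelValue]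
  | a :: t, acc, hnd, hacc => by
      classical
      simp only [refuelValue, List.toFinset_cons]
      have hat : a ∉ t.toFinset := by
        simp only [List.mem_toFinset]; exact (List.nodup_cons.mp hnd).1
      rw [Finset.sum_insert hat]
      have h1 : 0 < acc + c a := by linarith [hc a]
      have hhead : v a / (acc + c a) ≤ v a / c a := by
        gcongr
        · exact (hv a).le
        · exact hc a
        · linarith
      have htail := rv_bound hv hc t (acc + c a) (List.nodup_cons.mp hnd).2 h1.le
      linarith

/-- Value counting only entries with `p a = true`, but all entries consume. -/
noncomputable def gVal (p : α → Bool) : List α → ℝ → ℝ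
  | [], _ => 0
  | a :: t, acc => (if p a then v a / (acc + c a) else 0) + gVal p t (acc + c a)

lemma gVal_le_filter (hv : ∀ j, 0 < v j) (hc : ∀ j, 0 < c j) (p : α → Bool) :
    ∀ (l : List α) (acc : ℝ), 0 ≤ acc →
      gVal v c p l acc ≤ refuelValue v c (l.filter p) acc
  | [], acc, _ => le_refl 0
  | a :: t, acc, hacc => by
      have h1 : 0 < acc + c a := by linarith [hc a]
      by_cases hpa : p a
      · simp only [gVal, hpa, if_true, List.filter_cons, refuelValue]
        exact add_le_add (le_refl _) (gVal_le_filter hv hc p t (acc + c a) h1.le)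
      · simp only [gVal, hpa, if_false, List.filter_cons, Bool.false_eq_true]
        rw [zero_add]
        calc gVal v c p t (acc + c a)
            ≤ refuelValue v c (t.filter p) (acc + c a) :=
              gVal_le_filter hv hc p t (acc + c a) h1.le
          _ ≤ refuelValue v c (t.filter p) acc :=
              rv_mono v c hv hc _ acc (acc + c a) hacc (by linarith [hc a])

lemma sum_gVal (cls : α → ℕ) (m : ℕ) (hm : 0 < m) :
    ∀ (l : List α) (acc : ℝ),
      ∑ r ∈ Finset.range m, gVal v c (fun a => decide (cls a % m ≠ r)) l acc
        = (m - 1 : ℝ) * refuelValue v c l acc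
  | [], acc => by simp [gVal, refuelValue]
  | a :: t, acc => by
      simp only [gVal, refuelValue, Finset.sum_add_distrib]
      rw [sum_gVal cls m hm t (acc + c a)]
      have hmem : cls a % m ∈ Finset.range m := Finset.mem_range.mpr (Nat.mod_lt _ hm)
      have : ∑ r ∈ Finset.range m,
          (if (fun a => decide (cls a % m ≠ r)) a = true then v a / (acc + c a) else 0)
          = (m - 1 : ℝ) * (v a / (acc + c a)) := by
        simp only [decide_eq_true_eq]
        have heach : ∀ r ∈ Finset.range m,
            (if cls a % m ≠ r then v a / (acc + c a) else 0)
              = v a / (acc + c a) - (if cls a % m = r then v a / (acc + c a) else 0) := by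
          intro r _
          by_cases h : cls a % m = r <;> simp [h]
        rw [Finset.sum_congr rfl heach, Finset.sum_sub_distrib, Finset.sum_const,
          Finset.sum_ite_eq, if_pos hmem, Finset.card_range, nsmul_eq_mul]
        ring
      rw [this]
      ring

lemma refuelOpt_bddAbove [DecidableEq α] (hv : ∀ j, 0 < v j) (hc : ∀ j, 0 < c j)
    (T : Finset α) :
    BddAbove {x : ℝ | ∃ l : List α, l.Nodup ∧ l.toFinset = T ∧ x = refuelValue v c l 0} := by
  refine ⟨∑ a ∈ T, v a / c a, ?_⟩
  rintro x ⟨l, hnd, hT, rfl⟩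
  rw [← hT]
  exact rv_bound v c hv hc l 0 hnd le_rfl

lemma refuelValue_le_opt [DecidableEq α] (hv : ∀ j, 0 < v j) (hc : ∀ j, 0 < c j)
    (l : List α) (hnd : l.Nodup) :
    refuelValue v c l 0 ≤ refuelOpt v c l.toFinset :=
  le_csSup (refuelOpt_bddAbove v c hv hc _) ⟨l, hnd, rfl, rfl⟩

lemma refuelOpt_nonneg [DecidableEq α] (hv : ∀ j, 0 < v j) (hc : ∀ j, 0 < c j)
    (T : Finset α) : 0 ≤ refuelOpt v c T := by
  have h := refuelValue_le_opt v c hv hc T.toList T.nodup_toList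
  rw [Finset.toList_toFinset] at h
  exact le_trans (rv_nonneg v c hv hc _ 0 le_rfl) h

end Aux

open Classical in
/-- Random class deletion preserves value in expectation: partition the planes into
classes `cls`, draw `r` uniformly from `{0, …, m − 1}` (where `m = 1/ε`), and delete
all planes whose class is `≡ r (mod m)`.  The expected optimum of the surviving
instance is at least `(1 − ε) · OPT`. -/
theorem random_class_deletion (n : ℕ) (v c : Fin n → ℝ)
    (hv : ∀ j, 0 < v j) (hc : ∀ j, 0 < c j)
    (cls : Fin n → ℕ) (m : ℕ) (hm : 0 < m) (ε : ℝ) (hε : ε = 1 / m) :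
    (1 - ε) * refuelOpt v c Finset.univ ≤
      (∑ r ∈ Finset.range m,
        refuelOpt v c (Finset.univ.filter fun j => cls j % m ≠ r)) / m := by
  have hmR : (0:ℝ) < m := Nat.cast_pos.mpr hm
  -- RHS is nonnegative
  have hRHS0 : 0 ≤ (∑ r ∈ Finset.range m,
      refuelOpt v c (Finset.univ.filter fun j => cls j % m ≠ r)) / m := by
    apply div_nonneg _ hmR.le
    exact Finset.sum_nonneg fun r _ => refuelOpt_nonneg v c hv hc _
  -- key pointwise bound
  have key : ∀ x ∈ {x : ℝ | ∃ l : List (Fin n), l.Nodup ∧ l.toFinset = Finset.univ ∧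
      x = refuelValue v c l 0},
      (1 - ε) * x ≤ (∑ r ∈ Finset.range m,
        refuelOpt v c (Finset.univ.filter fun j => cls j % m ≠ r)) / m := by
    rintro x ⟨l, hnd, hT, rfl⟩
    have hjl : ∀ j, j ∈ l := fun j => by
      rw [← List.mem_toFinset, hT]; exact Finset.mem_univ j
    have step : ∀ r ∈ Finset.range m,
        gVal v c (fun a => decide (cls a % m ≠ r)) l 0 ≤
          refuelOpt v c (Finset.univ.filter fun j => cls j % m ≠ r) := by
      intro r _
      calc gVal v c (fun a => decide (cls a % m ≠ r)) l 0
          ≤ refuelValue v c (l.filter (fun a => decide (cls a % m ≠ r))) 0 :=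
            gVal_le_filter v c hv hc _ l 0 le_rfl
        _ ≤ refuelOpt v c ((l.filter (fun a => decide (cls a % m ≠ r))).toFinset) :=
            refuelValue_le_opt v c hv hc _ (hnd.filter _)
        _ = refuelOpt v c (Finset.univ.filter fun j => cls j % m ≠ r) := by
            congr 1
            ext j
            simp [List.mem_filter, hjl j]
    have hsum : (m - 1 : ℝ) * refuelValue v c l 0 ≤
        ∑ r ∈ Finset.range m,
          refuelOpt v c (Finset.univ.filter fun j => cls j % m ≠ r) := by
      rw [← sum_gVal v c cls m hm l 0]
      exact Finset.sum_le_sum step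
    have hx0 : 0 ≤ refuelValue v c l 0 := rv_nonneg v c hv hc l 0 le_rfl
    have heq : (1 - ε) * refuelValue v c l 0
        = ((m : ℝ) - 1) * refuelValue v c l 0 / m := by
      rw [hε]; field_simp
    rw [heq]
    exact (div_le_div_iff_of_pos_right hmR).mpr hsum
  -- nonempty
  have hne : Set.Nonempty {x : ℝ | ∃ l : List (Fin n), l.Nodup ∧ l.toFinset = Finset.univ ∧
      x = refuelValue v c l 0} :=
    ⟨refuelValue v c Finset.univ.toList 0,
      Finset.univ.toList, Finset.nodup_toList _, Finset.toList_toFinset _, rfl⟩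
  by_cases hm1 : m = 1
  · subst hm1
    have h0 : (1 - ε) = 0 := by rw [hε]; norm_num
    rw [h0, zero_mul]
    exact hRHS0
  · have hm2 : (1:ℝ) < m := by
      have : 2 ≤ m := Nat.lt_of_le_of_ne hm (Ne.symm hm1)
      exact_mod_cast this
    have hεlt : 0 < 1 - ε := by
      rw [hε]
      have : 1 / (m:ℝ) < 1 := (div_lt_one hmR).mpr hm2
      linarith
    have hsup : refuelOpt v c Finset.univ ≤
        ((∑ r ∈ Finset.range m,
          refuelOpt v c (Finset.univ.filter fun j => cls j % m ≠ r)) / m) / (1 - ε) := by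
      apply csSup_le hne
      intro x hx
      rw [le_div_iff₀ hεlt, mul_comm]
      exact key x hx
    calc (1 - ε) * refuelOpt v c Finset.univ
        ≤ (1 - ε) * (((∑ r ∈ Finset.range m,
            refuelOpt v c (Finset.univ.filter fun j => cls j % m ≠ r)) / m) / (1 - ε)) := by
          exact mul_le_mul_of_nonneg_left hsup hεlt.le
      _ = (∑ r ∈ Finset.range m,
            refuelOpt v c (Finset.univ.filter fun j => cls j % m ≠ r)) / m := by
          field_simp
end
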